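/- The functions φ^{ij}(u,v) = u^i − v^j (for i,j = 1,…,n) on R^n × R^n are skew-symmetric in the sense φ^{ij}(u,v) = −φ^{ji}(v,u) and solve the classical Yang–Baxter equation for W_n. -/
import Mathlib


open scoped BigOperators

/-- Partial derivative with respect to the first argument `u^s`. -/
noncomputable def D1 {n : ℕ} (f : (Fin n → ℝ) → (Fin n → ℝ) → ℝ) (s : Fin n)
    (u v : Fin n → ℝ) : ℝ :=
  fderiv ℝ (fun x => f x v) u (Pi.single s 1)

/-- The classical Yang–Baxter expression `Φ^{ijk}(u,v,w)` for `W_n`. -/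
noncomputable def CYBElhs {n : ℕ} (φ : Fin n → Fin n → (Fin n → ℝ) → (Fin n → ℝ) → ℝ)
    (i j k : Fin n) (u v w : Fin n → ℝ) : ℝ :=
  ∑ s, (φ k s w u * D1 (φ i j) s u v + φ s k v w * D1 (φ j i) s v u
      + φ i s u v * D1 (φ j k) s v w + φ s i w u * D1 (φ k j) s w v
      + φ j s v w * D1 (φ k i) s w u + φ s j u v * D1 (φ i k) s u w)


lemma D1_eq {n : ℕ} (i j s : Fin n) (u v : Fin n → ℝ) :
    D1 (fun u v => u i - v j) s u v = if i = s then 1 else 0 := by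
  unfold D1
  have h : (fderiv ℝ (fun x : Fin n → ℝ => x i - v j) u) =
      ContinuousLinearMap.proj i := by
    rw [fderiv_sub_const]
    exact (ContinuousLinearMap.proj (R := ℝ) (φ := fun _ : Fin n => ℝ) i).fderiv
  rw [h]
  simp [ContinuousLinearMap.proj_apply, Pi.single_apply, eq_comm]

/-- `φ^{ij}(u,v) = u^i − v^j` is skew-symmetric and solves the CYBE for `W_n`. -/
theorem translation_r_matrix {n : ℕ} :
    let φ : Fin n → Fin n → (Fin n → ℝ) → (Fin n → ℝ) → ℝ := fun i j u v => u i - v j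
    (∀ i j u v, φ i j u v = -φ j i v u) ∧
      (∀ (i j k : Fin n) (u v w : Fin n → ℝ), CYBElhs φ i j k u v w = 0) := by
  intro φ
  constructor
  · intro i j u v; simp only [φ]; ring
  · intro i j k u v w
    simp only [CYBElhs, φ, D1_eq, mul_ite, mul_one, mul_zero]
    simp only [Finset.sum_add_distrib, Finset.sum_ite_eq, Finset.mem_univ, if_true]
    ring
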